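/- arXiv:1805.11052 — 2 statements merged into one kernel-verified Lean document; each statement's English description precedes it below -/
import Mathlib

section
/- If T is a bounded operator on a Hilbert space H and M is a closed invariant subspace of T, then the multiplicity of the compression of T to the orthogonal complement of M is at most the multiplicity of T, and the multiplicity of T is at most the sum of the multiplicity of the restriction of T to M and the multiplicity of the compression of T to the orthogonal complement of M. -/
/- STATEMENT 0: For a bounded operator `T` on a Hilbert space `H` and a closed invariant
subspace `M` of `T`:
`μ_{P_{M^⊥} T|_{M^⊥}} ≤ μ_T ≤ μ_{T|_M} + μ_{P_{M^⊥} T|_{M^⊥}}`. -/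

noncomputable section
namespace Paper

variable {H : Type} [NormedAddCommGroup H] [InnerProductSpace ℂ H] [CompleteSpace H]

/-- The smallest closed `T`-invariant subspace containing all the `x i`. -/
def orbitClosure (T : H →L[ℂ] H) {ι : Type} (x : ι → H) : Submodule ℂ H :=
  (Submodule.span ℂ {y | ∃ (i : ι) (j : ℕ), y = (T ^ j) (x i)}).topologicalClosure

/-- The multiplicity `μ_T`: the minimal number of vectors whose `T`-orbit spans `H`. -/
def multiplicity (T : H →L[ℂ] H) : Cardinal :=
  sInf {c : Cardinal | ∃ (ι : Type) (x : ι → H), orbitClosure T x = ⊤ ∧ c = Cardinal.mk ι}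

/-- The restriction `T|_M` of `T` to an invariant subspace `M`. -/
def restrictOp (T : H →L[ℂ] H) (M : Submodule ℂ H) (hM : ∀ x ∈ M, T x ∈ M) :
    M →L[ℂ] M :=
  (T.comp M.subtypeL).codRestrict M fun x => hM x x.2

/-- The compression `P_{M^⊥} T|_{M^⊥}` of `T` to the orthogonal complement of `M`. -/
def compressOp (T : H →L[ℂ] H) (M : Submodule ℂ H) [CompleteSpace M] :
    Mᗮ →L[ℂ] Mᗮ :=
  (Mᗮ.orthogonalProjectionOnto).comp (T.comp Mᗮ.subtypeL)

section Aux

lemma mult_set_nonempty (T : H →L[ℂ] H) :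
    {c : Cardinal | ∃ (ι : Type) (x : ι → H), orbitClosure T x = ⊤ ∧ c = Cardinal.mk ι}.Nonempty := by
  refine ⟨Cardinal.mk H, H, id, ?_, rfl⟩
  have hs : Submodule.span ℂ {y | ∃ (i : H) (j : ℕ), y = (T ^ j) (id i)} = ⊤ := by
    rw [Submodule.eq_top_iff']
    intro v
    exact Submodule.subset_span ⟨v, 0, by simp⟩
  rw [orbitClosure, hs]
  exact top_le_iff.mp (Submodule.le_topologicalClosure _)

lemma orbitClosure_le {T : H →L[ℂ] H} {ι : Type} {x : ι → H} {E : Submodule ℂ H}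
    (hE : IsClosed (E : Set H)) (h : ∀ i j, (T ^ j) (x i) ∈ E) : orbitClosure T x ≤ E := by
  refine Submodule.topologicalClosure_minimal _ ?_ hE
  rw [Submodule.span_le]
  rintro y ⟨i, j, rfl⟩
  exact h i j

variable (T : H →L[ℂ] H) (M : Submodule ℂ H) [CompleteSpace M]

lemma pow_mem_of_inv (hMinv : ∀ x ∈ M, T x ∈ M) : ∀ (j : ℕ), ∀ m ∈ M, (T ^ j) m ∈ M := by
  intro j
  induction j with
  | zero => simpa using fun m hm => hm
  | succ j ih =>
    intro m hm
    rw [pow_succ', ContinuousLinearMap.mul_apply]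
    exact hMinv _ (ih m hm)

lemma proj_eq_zero_of_mem {m : H} (hm : m ∈ M) : Mᗮ.orthogonalProjectionOnto m = 0 :=
  Submodule.orthogonalProjectionOnto_apply_of_mem_orthogonal
    (by rw [Submodule.orthogonal_orthogonal]; exact hm)

lemma compress_pow (hMinv : ∀ x ∈ M, T x ∈ M) (j : ℕ) (z : Mᗮ) :
    ((compressOp T M) ^ j) z = Mᗮ.orthogonalProjectionOnto ((T ^ j) (z : H)) := by
  induction j with
  | zero => simp [Submodule.orthogonalProjectionOnto_mem_subspace_eq_self]
  | succ j ih =>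
    have hmem : (T ^ j) (z : H) - ((Mᗮ.orthogonalProjectionOnto ((T ^ j) (z : H))) : H) ∈ M := by
      have := Submodule.sub_starProjection_mem_orthogonal (K := Mᗮ) ((T ^ j) (z : H))
      rwa [Submodule.starProjection_apply, Submodule.orthogonal_orthogonal] at this
    rw [pow_succ', pow_succ', ContinuousLinearMap.mul_apply, ContinuousLinearMap.mul_apply, ih]
    have key : T ((T ^ j) (z : H)) =
        T (((Mᗮ.orthogonalProjectionOnto ((T ^ j) (z : H))) : H)) +
          T ((T ^ j) (z : H) - ((Mᗮ.orthogonalProjectionOnto ((T ^ j) (z : H))) : H)) := by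
      rw [← map_add]; congr 1; abel
    show Mᗮ.orthogonalProjectionOnto
        (T ((Mᗮ.orthogonalProjectionOnto ((T ^ j) (z : H)) : H))) = _
    rw [key, map_add, proj_eq_zero_of_mem (M := M) (hMinv _ hmem), add_zero]

lemma compress_pow_proj (hMinv : ∀ x ∈ M, T x ∈ M) (j : ℕ) (v : H) :
    ((compressOp T M) ^ j) (Mᗮ.orthogonalProjectionOnto v) =
      Mᗮ.orthogonalProjectionOnto ((T ^ j) v) := by
  rw [compress_pow T M hMinv]
  have hmem : v - ((Mᗮ.orthogonalProjectionOnto v) : H) ∈ M := by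
    have := Submodule.sub_starProjection_mem_orthogonal (K := Mᗮ) v
    rwa [Submodule.starProjection_apply, Submodule.orthogonal_orthogonal] at this
  have : (T ^ j) v = (T ^ j) ((Mᗮ.orthogonalProjectionOnto v) : H) +
      (T ^ j) (v - ((Mᗮ.orthogonalProjectionOnto v) : H)) := by
    rw [← map_add]; congr 1; abel
  rw [this, map_add, proj_eq_zero_of_mem (M := M) (pow_mem_of_inv T M hMinv j _ hmem), add_zero]

lemma restrict_pow (hMinv : ∀ x ∈ M, T x ∈ M) (j : ℕ) (z : M) :
    (((restrictOp T M hMinv) ^ j) z : H) = (T ^ j) (z : H) := by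
  induction j with
  | zero => simp
  | succ j ih =>
    rw [pow_succ', pow_succ', ContinuousLinearMap.mul_apply, ContinuousLinearMap.mul_apply, ← ih]
    rfl


lemma range_le_of_dense {X : Type} [NormedAddCommGroup X] [InnerProductSpace ℂ X]
    (f : X →L[ℂ] H) {s : Submodule ℂ X} (hs : s.topologicalClosure = ⊤)
    {E : Submodule ℂ H} (hE : IsClosed (E : Set H))
    (h : s.map (f : X →ₗ[ℂ] H) ≤ E) : LinearMap.range (f : X →ₗ[ℂ] H) ≤ E := by
  have h1 : (⊤ : Submodule ℂ X).map (f : X →ₗ[ℂ] H) ≤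
      (s.map (f : X →ₗ[ℂ] H)).topologicalClosure := by
    rw [← hs]; exact Submodule.topologicalClosure_map f s
  rw [← Submodule.map_top]
  exact le_trans h1 (Submodule.topologicalClosure_minimal _ h hE)

lemma compress_orbit_top (hMinv : ∀ x ∈ M, T x ∈ M) {ι : Type} (x : ι → H)
    (hx : orbitClosure T x = ⊤) :
    orbitClosure (compressOp T M) (fun i => Mᗮ.orthogonalProjectionOnto (x i)) = ⊤ := by
  have hsurj : Function.Surjective (Mᗮ.orthogonalProjectionOnto : H →L[ℂ] Mᗮ) := fun z =>
    ⟨(z : H), Submodule.orthogonalProjectionOnto_mem_subspace_eq_self z⟩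
  rw [eq_top_iff]
  have h1 := hsurj.denseRange.topologicalClosure_map_submodule
    (s := Submodule.span ℂ {y | ∃ (i : ι) (j : ℕ), y = (T ^ j) (x i)}) hx
  rw [← h1]
  apply Submodule.topologicalClosure_mono
  rw [Submodule.map_span, Submodule.span_le]
  rintro _ ⟨_, ⟨i, j, rfl⟩, rfl⟩
  exact Submodule.subset_span ⟨i, j, (compress_pow_proj T M hMinv j (x i)).symm⟩

lemma sum_orbit_top (hMinv : ∀ x ∈ M, T x ∈ M) {ι κ : Type} (x : ι → M) (y : κ → Mᗮ)
    (hx : orbitClosure (restrictOp T M hMinv) x = ⊤)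
    (hy : orbitClosure (compressOp T M) y = ⊤) :
    orbitClosure T (Sum.elim (fun i => (x i : H)) (fun k => (y k : H))) = ⊤ := by
  set E := orbitClosure T (Sum.elim (fun i => (x i : H)) (fun k => (y k : H))) with hE
  have hEclosed : IsClosed (E : Set H) := Submodule.isClosed_topologicalClosure _
  have hgen : ∀ (s : ι ⊕ κ) (j : ℕ),
      (T ^ j) (Sum.elim (fun i => (x i : H)) (fun k => (y k : H)) s) ∈ E :=
    fun s j => Submodule.le_topologicalClosure _ (Submodule.subset_span ⟨s, j, rfl⟩)
  have hME : M ≤ E := by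
    have := range_le_of_dense (H := H) M.subtypeL hx hEclosed ?_
    · rwa [Submodule.toLinearMap_subtypeL, Submodule.range_subtype] at this
    · rw [Submodule.map_span, Submodule.span_le]
      rintro _ ⟨_, ⟨i, j, rfl⟩, rfl⟩
      have : (M.subtypeL : M →ₗ[ℂ] H) (((restrictOp T M hMinv) ^ j) (x i)) =
          (T ^ j) (Sum.elim (fun i => (x i : H)) (fun k => (y k : H)) (Sum.inl i)) := by
        simpa using restrict_pow T M hMinv j (x i)
      rw [this]
      exact hgen (Sum.inl i) j
  have hMpE : Mᗮ ≤ E := by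
    have := range_le_of_dense (H := H) Mᗮ.subtypeL hy hEclosed ?_
    · rwa [Submodule.toLinearMap_subtypeL, Submodule.range_subtype] at this
    · rw [Submodule.map_span, Submodule.span_le]
      rintro _ ⟨_, ⟨k, j, rfl⟩, rfl⟩
      have h2 : (Mᗮ.subtypeL : Mᗮ →ₗ[ℂ] H) (((compressOp T M) ^ j) (y k)) =
          ((Mᗮ.orthogonalProjectionOnto ((T ^ j) ((y k : H)))) : H) := by
        simpa using congrArg (Subtype.val) (compress_pow T M hMinv j (y k))
      rw [h2]
      have hmem : (T ^ j) ((y k : H)) -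
          ((Mᗮ.orthogonalProjectionOnto ((T ^ j) ((y k : H)))) : H) ∈ M := by
        have := Submodule.sub_starProjection_mem_orthogonal (K := Mᗮ) ((T ^ j) ((y k : H)))
        rwa [Submodule.starProjection_apply, Submodule.orthogonal_orthogonal] at this
      have hv : (T ^ j) ((y k : H)) ∈ E := hgen (Sum.inr k) j
      have : ((Mᗮ.orthogonalProjectionOnto ((T ^ j) ((y k : H)))) : H) =
          (T ^ j) ((y k : H)) -
            ((T ^ j) ((y k : H)) - ((Mᗮ.orthogonalProjectionOnto ((T ^ j) ((y k : H)))) : H)) := by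
        abel
      rw [this]
      exact sub_mem hv (hME hmem)
  rw [eq_top_iff, ← Submodule.sup_orthogonal_of_hasOrthogonalProjection (K := M)]
  exact sup_le hME hMpE

end Aux

theorem statement0 [TopologicalSpace.SeparableSpace H]
    (T : H →L[ℂ] H) (M : Submodule ℂ H) (hMclosed : IsClosed (M : Set H))
    (hMinv : ∀ x ∈ M, T x ∈ M) :
    haveI : CompleteSpace M := hMclosed.completeSpace_coe
    multiplicity (compressOp T M) ≤ multiplicity T ∧
      multiplicity T ≤
        multiplicity (restrictOp T M hMinv) + multiplicity (compressOp T M) := by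
  haveI : CompleteSpace M := hMclosed.completeSpace_coe
  constructor
  · obtain ⟨ι, x, hx, hc⟩ := csInf_mem (mult_set_nonempty T)
    have h1 : multiplicity (compressOp T M) ≤ Cardinal.mk ι :=
      csInf_le' ⟨ι, fun i => Mᗮ.orthogonalProjectionOnto (x i),
        compress_orbit_top T M hMinv x hx, rfl⟩
    exact le_trans h1 (le_of_eq hc.symm)
  · obtain ⟨ι, x, hx, hcι⟩ := csInf_mem (mult_set_nonempty (restrictOp T M hMinv))
    obtain ⟨κ, y, hy, hcκ⟩ := csInf_mem (mult_set_nonempty (compressOp T M))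
    have h2 : multiplicity T ≤ Cardinal.mk (ι ⊕ κ) :=
      csInf_le' ⟨ι ⊕ κ, Sum.elim (fun i => (x i : H)) (fun k => (y k : H)),
        sum_orbit_top T M hMinv x y hx hy, rfl⟩
    rw [Cardinal.mk_sum, Cardinal.lift_id, Cardinal.lift_id] at h2
    exact h2.trans
      (le_of_eq (by rw [show multiplicity (restrictOp T M hMinv) = Cardinal.mk ι from hcι,
        show multiplicity (compressOp T M) = Cardinal.mk κ from hcκ]))


end Paper
end
end

section
/- For any n ≥ 2 and functions f_1,...,f_n ∈ L^2(T), there exist φ_2,...,φ_n ∈ H∞ such that the essential support of f_1 + Σ_{k=2}^n φ_k f_k equals the union of the essential supports of f_1,...,f_n. -/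
/- STATEMENT 5: For `n ≥ 2` and `f_1, ..., f_n ∈ L²(𝕋)` there exist
`φ_2, ..., φ_n ∈ H^∞` such that
`ess supp (f_1 + Σ_{k≥2} φ_k f_k) = ⋃_k ess supp f_k` (up to null sets). -/

noncomputable section
open MeasureTheory Complex Real
open scoped ENNReal
namespace Paper

instance : Fact (0 < 2 * Real.pi) := ⟨by positivity⟩

abbrev 𝕋c : Type := AddCircle (2 * Real.pi)
abbrev μc : Measure 𝕋c := AddCircle.haarAddCircle

/-- The boundary characterization of `H^∞`: an essentially bounded function on the circle
whose negative Fourier coefficients vanish. -/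
def HinfBoundary (g : 𝕋c → ℂ) : Prop :=
  MemLp g ∞ μc ∧ ∀ n : ℤ, 0 < n → ∫ θ, g θ * fourier n θ ∂μc = 0

lemma integral_fourier_zero {m : ℤ} (hm : m ≠ 0) : ∫ θ, fourier m θ ∂μc = 0 :=
  integral_eq_zero_of_add_right_eq_neg (μ := μc)
    (fourier_add_half_inv_index hm (by positivity))

lemma const_HinfBoundary (c : ℂ) : HinfBoundary (fun _ => c) := by
  refine ⟨memLp_const c, fun m hm => ?_⟩
  rw [MeasureTheory.integral_const_mul, integral_fourier_zero hm.ne', mul_zero]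

theorem statement5 (n : ℕ) (hn : 2 ≤ n) (f : Fin n → (𝕋c → ℂ))
    (hf : ∀ k, MemLp (f k) 2 μc) :
    ∃ φ : Fin n → (𝕋c → ℂ), (∀ k, HinfBoundary (φ k)) ∧
      ({θ | ∃ k, f k θ ≠ 0} : Set 𝕋c) =ᵐ[μc]
        ({θ | f ⟨0, by omega⟩ θ
            + ∑ k ∈ Finset.univ \ {(⟨0, by omega⟩ : Fin n)}, φ k θ * f k θ ≠ 0} : Set 𝕋c) := by
  have hm : ∀ k, AEStronglyMeasurable (f k) μc := fun k => (hf k).aestronglyMeasurable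
  set g : Fin n → 𝕋c → ℂ := fun k => (hm k).mk (f k) with hgdef
  have hgm : ∀ k, Measurable (g k) := fun k =>
    ((hm k).stronglyMeasurable_mk).measurable
  have hfg : ∀ᵐ θ ∂μc, ∀ k, f k θ = g k θ :=
    (MeasureTheory.ae_all_iff).mpr fun k => (hm k).ae_eq_mk
  -- the bad set
  set S : Set (𝕋c × ℝ) :=
    {p | (∃ k, g k p.1 ≠ 0) ∧ ∑ k : Fin n, (p.2 : ℂ) ^ (k : ℕ) * g k p.1 = 0} with hS
  have hA : MeasurableSet {p : 𝕋c × ℝ | ∃ k, g k p.1 ≠ 0} := by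
    have : {p : 𝕋c × ℝ | ∃ k, g k p.1 ≠ 0}
        = ⋃ k, (fun p : 𝕋c × ℝ => g k p.1) ⁻¹' ({0}ᶜ) := by
      ext p; simp
    rw [this]
    exact MeasurableSet.iUnion fun k =>
      ((hgm k).comp measurable_fst) (measurableSet_singleton 0).compl
  have hF : Measurable fun p : 𝕋c × ℝ => ∑ k : Fin n, (p.2 : ℂ) ^ (k : ℕ) * g k p.1 := by
    apply Finset.measurable_sum
    intro k _
    exact ((Complex.measurable_ofReal.comp measurable_snd).pow_const _).mul
      ((hgm k).comp measurable_fst)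
  have hSm : MeasurableSet S := hA.inter (hF (measurableSet_singleton 0))
  -- every θ-slice is finite, hence null
  have hslice : ∀ θ : 𝕋c, (volume : Measure ℝ) (Prod.mk θ ⁻¹' S) = 0 := by
    intro θ
    by_cases h : ∃ k, g k θ ≠ 0
    · obtain ⟨k₀, hk₀⟩ := h
      set p : Polynomial ℂ := ∑ k : Fin n, Polynomial.C (g k θ) * Polynomial.X ^ (k : ℕ) with hp
      have hpne : p ≠ 0 := by
        intro h0
        apply hk₀
        have : p.coeff (k₀ : ℕ) = g k₀ θ := by
          rw [hp, Polynomial.finset_sum_coeff]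
          rw [Finset.sum_eq_single k₀]
          · simp
          · intro b _ hb
            simp only [Polynomial.coeff_C_mul, Polynomial.coeff_X_pow]
            rw [if_neg fun h => hb ((Fin.val_injective h).symm)]
            ring
          · simp
        rw [h0] at this; simpa using this.symm
      have hsub : Prod.mk θ ⁻¹' S ⊆ (fun t : ℝ => (t : ℂ)) ⁻¹' {x | p.IsRoot x} := by
        intro t ht
        have := ht.2
        simp only [Set.mem_preimage, Set.mem_setOf_eq, Polynomial.IsRoot, hp,
          Polynomial.eval_finset_sum, Polynomial.eval_mul, Polynomial.eval_C,
          Polynomial.eval_pow, Polynomial.eval_X]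
        rw [← this]
        exact Finset.sum_congr rfl fun k _ => mul_comm _ _
      refine measure_mono_null hsub ?_
      exact Set.Finite.measure_zero
        ((Polynomial.finite_setOf_isRoot hpne).preimage
          (Function.Injective.injOn Complex.ofReal_injective)) _
    · have : Prod.mk θ ⁻¹' S = ∅ := by
        ext t; simp only [Set.mem_preimage, hS, Set.mem_setOf_eq, Set.mem_empty_iff_false]
        tauto
      simp [this]
  have hprod : (μc.prod (volume : Measure ℝ)) S = 0 :=
    (Measure.measure_prod_null hSm).mpr (Filter.Eventually.of_forall hslice)
  -- swap coordinates
  set S' : Set (ℝ × 𝕋c) := Prod.swap ⁻¹' S with hS'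
  have hS'm : MeasurableSet S' := hSm.preimage measurable_swap
  have hprod' : ((volume : Measure ℝ).prod μc) S' = 0 := by
    rw [← MeasureTheory.Measure.prod_swap]
    rw [MeasureTheory.Measure.map_apply measurable_swap hS'm]
    have heq : Prod.swap ⁻¹' S' = S := by ext x; simp [hS']
    rw [heq]; exact hprod
  have hae : (fun t => μc (Prod.mk t ⁻¹' S')) =ᵐ[(volume : Measure ℝ)] 0 :=
    (Measure.measure_prod_null hS'm).mp hprod'
  obtain ⟨t, ht⟩ := hae.exists
  -- the functions
  refine ⟨fun k => fun _ => (t : ℂ) ^ (k : ℕ), fun k => const_HinfBoundary _, ?_⟩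
  have ht0 : μc (Prod.mk t ⁻¹' S') = 0 := ht
  have htbad : ∀ᵐ θ ∂μc,
      ¬((∃ k, g k θ ≠ 0) ∧ ∑ k : Fin n, (t : ℂ) ^ (k : ℕ) * g k θ = 0) := by
    have := (MeasureTheory.ae_iff (μ := μc) (p := fun a => a ∉ Prod.mk t ⁻¹' S')).mpr (by simp only [not_not, Set.setOf_mem_eq]; exact ht0)
    filter_upwards [this] with θ hθ
    simpa [hS', hS] using hθ
  rw [Filter.eventuallyEq_set]
  filter_upwards [hfg, htbad] with θ hθ hb
  set z : Fin n := ⟨0, by omega⟩ with hzdef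
  have key : f z θ + ∑ k ∈ Finset.univ \ {z}, (t : ℂ) ^ (k : ℕ) * f k θ
      = ∑ k : Fin n, (t : ℂ) ^ (k : ℕ) * g k θ := by
    rw [Finset.sdiff_singleton_eq_erase,
      ← Finset.add_sum_erase _ (fun k : Fin n => (t : ℂ) ^ (k : ℕ) * g k θ)
        (Finset.mem_univ z)]
    congr 1
    · rw [hθ z]
      simp [hzdef]
    · exact Finset.sum_congr rfl fun k _ => by rw [hθ k]
  constructor
  · rintro ⟨k, hk⟩
    show f z θ + ∑ k ∈ Finset.univ \ {z}, (t : ℂ) ^ (k : ℕ) * f k θ ≠ 0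
    rw [key]
    exact fun h => hb ⟨⟨k, (hθ k) ▸ hk⟩, h⟩
  · intro hne
    by_contra hc
    push_neg at hc
    apply hne
    show f z θ + ∑ k ∈ Finset.univ \ {z}, (t : ℂ) ^ (k : ℕ) * f k θ = 0
    simp [hc]

end Paper
end
end
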